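/- arXiv:1104.2809 — 6 statements merged into one kernel-verified Lean document; each statement's English description precedes it below -/
import Mathlib

section
/- For every positive integer l and every n, if there exist functions f, g : {0,1,...,l} → {0,1}^n satisfying f(x) AND g(y) = 0^n if and only if x + y ≤ l (for all x, y in {0,...,l}), then n ≥ l. -/
/-- Lower bound for the two function problem: any valid pair `(f, g)` with strings
of length `n` requires `n ≥ l`. -/
theorem stmt_1 (l n : ℕ) (hl : 0 < l)
    (f g : Fin (l + 1) → (Fin n → Bool))
    (h : ∀ x y : Fin (l + 1),
      (∀ k, (f x k && g y k) = false) ↔ (x : ℕ) + (y : ℕ) ≤ l) :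
    l ≤ n := by
  have key : ∀ i : Fin l, ∃ k : Fin n,
      f ⟨i + 1, by omega⟩ k = true ∧ g ⟨l - i, by omega⟩ k = true := by
    intro i
    have hi := i.isLt
    have hne : ¬ (∀ k, (f ⟨i + 1, by omega⟩ k && g ⟨l - i, by omega⟩ k) = false) := by
      rw [h]; simp; omega
    push_neg at hne
    obtain ⟨k, hk⟩ := hne
    exact ⟨k, by simpa [Bool.and_eq_true] using (Bool.not_eq_false _).mp hk⟩
  choose φ hφf hφg using key
  have hinj : Function.Injective φ := by
    intro i j hij
    by_contra hne
    rcases Nat.lt_or_ge (i : ℕ) (j : ℕ) with hlt | hge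
    · have := (h ⟨i + 1, by omega⟩ ⟨l - j, by omega⟩).mpr (by simp; omega) (φ i)
      rw [hφf i, hij, hφg j] at this
      simp at this
    · have hlt' : (j : ℕ) < (i : ℕ) := by
        rcases Nat.lt_or_ge (j : ℕ) (i : ℕ) with h' | h'
        · exact h'
        · exact absurd (Fin.ext (le_antisymm h' hge)) hne
      have := (h ⟨j + 1, by omega⟩ ⟨l - i, by omega⟩).mpr (by simp; omega) (φ j)
      rw [hφf j, ← hij, hφg i] at this
      simp at this
  simpa using Fintype.card_le_of_injective φ hinj
end

section
/- Suppose f, g : {0,...,l} → {0,1}^n satisfy f(x) AND g(y) = 0^n iff x + y ≤ l, and additionally the support sets satisfy G(f(0)) ⊆ G(f(1)) ⊆ ... ⊆ G(f(l)), where G(s) is the set of positions where s has a 1. Then all the f(i) are pairwise distinct, the inclusions are strict, and hence n ≥ l. -/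
/-- If `f, g` solve the two function problem and the supports of `f` form a monotone
chain, then the `f i` are pairwise distinct, the inclusions are strict, and `n ≥ l`. -/
theorem stmt_2 (l n : ℕ)
    (f g : Fin (l + 1) → (Fin n → Bool))
    (h : ∀ x y : Fin (l + 1),
      (∀ k, (f x k && g y k) = false) ↔ (x : ℕ) + (y : ℕ) ≤ l)
    (hmono : ∀ i j : Fin (l + 1), i ≤ j →
      {k : Fin n | f i k = true} ⊆ {k : Fin n | f j k = true}) :
    (∀ i j : Fin (l + 1), i ≠ j → f i ≠ f j) ∧
    (∀ i j : Fin (l + 1), i < j →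
      {k : Fin n | f i k = true} ⊂ {k : Fin n | f j k = true}) ∧
    l ≤ n := by
  -- key: for i < j there is k with f j k = true and f i k = false
  have key : ∀ i j : Fin (l + 1), i < j →
      ∃ k, f j k = true ∧ f i k = false := by
    intro i j hij
    have hi : (i : ℕ) < l + 1 := i.isLt
    set y : Fin (l + 1) := ⟨l - (i : ℕ), by omega⟩ with hy
    have hiy : (∀ k, (f i k && g y k) = false) := (h i y).mpr (by simp [hy]; omega)
    have hjy : ¬ (∀ k, (f j k && g y k) = false) := by
      rw [h j y]
      have : (i : ℕ) < (j : ℕ) := hij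
      simp [hy]; omega
    push_neg at hjy
    obtain ⟨k, hk⟩ := hjy
    have hk' : f j k = true ∧ g y k = true := by
      constructor <;> [cases hfj : f j k; cases hgy : g y k] <;>
        simp_all
    refine ⟨k, hk'.1, ?_⟩
    have := hiy k
    cases hfi : f i k
    · rfl
    · rw [hfi, hk'.2] at this; simp at this
  have hstrict : ∀ i j : Fin (l + 1), i < j →
      {k : Fin n | f i k = true} ⊂ {k : Fin n | f j k = true} := by
    intro i j hij
    obtain ⟨k, hk1, hk2⟩ := key i j hij
    refine ⟨hmono i j (le_of_lt hij), fun hsub => ?_⟩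
    have : f i k = true := hsub hk1
    rw [hk2] at this; exact Bool.false_ne_true this
  have hne : ∀ i j : Fin (l + 1), i ≠ j → f i ≠ f j := by
    intro i j hij hfe
    rcases lt_or_gt_of_ne hij with hlt | hgt
    · obtain ⟨k, hk1, hk2⟩ := key i j hlt
      rw [hfe] at hk2; rw [hk1] at hk2; simp at hk2
    · obtain ⟨k, hk1, hk2⟩ := key j i hgt
      rw [hfe] at hk1; rw [hk1] at hk2; simp at hk2
  refine ⟨hne, hstrict, ?_⟩
  -- cardinality argument
  set S : Fin (l + 1) → Finset (Fin n) :=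
    fun i => Finset.univ.filter (fun k => f i k = true) with hS
  have hcard : ∀ i j : Fin (l + 1), i < j → (S i).card < (S j).card := by
    intro i j hij
    apply Finset.card_lt_card
    obtain ⟨k, hk1, hk2⟩ := key i j hij
    constructor
    · intro k hk
      simp only [hS, Finset.mem_filter, Finset.mem_univ, true_and] at hk ⊢
      exact hmono i j (le_of_lt hij) hk
    · intro hsub
      have : k ∈ S i := hsub (by simp [hS, hk1])
      simp [hS, hk2] at this
  have hge : ∀ m : ℕ, ∀ hm : m < l + 1, m ≤ (S ⟨m, hm⟩).card := by
    intro m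
    induction m with
    | zero => intro _; exact Nat.zero_le _
    | succ p ih =>
      intro hm
      have hp : p < l + 1 := by omega
      have := hcard ⟨p, hp⟩ ⟨p + 1, hm⟩ (by simp [Fin.lt_def])
      have := ih hp
      omega
  have := hge l (by omega)
  have hub : (S ⟨l, by omega⟩).card ≤ n := by
    simpa using Finset.card_le_card (Finset.subset_univ (S ⟨l, by omega⟩))
  omega
end

section
/- Let L(M) denote the minimum l for which the binary matrix M admits a {0,1}^l inner-product representation (M(i,j)=0 iff E_i·W_j=0). For the n×n diagonal-zero matrix Z_n (0 on the diagonal, 1 off-diagonal), L(Z_n) ≥ log₂ n + 1 for n ≥ 2. -/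
lemma choose_le_two_pow_pred {m k : ℕ} : (m+1).choose k ≤ 2 ^ m := by
  rcases Nat.eq_zero_or_pos k with rfl | hk
  · simpa using Nat.one_le_two_pow
  rcases le_or_gt k m with hkm | hkm
  · obtain ⟨k', rfl⟩ := Nat.exists_eq_add_of_le hk
    rw [Nat.add_comm 1 k', Nat.choose_succ_succ]
    have hsub : ({k', k'+1} : Finset ℕ) ⊆ Finset.range (m+1) := by
      intro x hx
      simp only [Finset.mem_insert, Finset.mem_singleton] at hx
      rcases hx with rfl | rfl <;> simp <;> omega
    calc m.choose k' + m.choose (k'+1)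
        = ∑ i ∈ ({k', k'+1} : Finset ℕ), m.choose i := by
          rw [Finset.sum_pair (by omega)]
      _ ≤ ∑ i ∈ Finset.range (m+1), m.choose i :=
          Finset.sum_le_sum_of_subset hsub
      _ = 2 ^ m := Nat.sum_range_choose m
  · rcases eq_or_lt_of_le (Nat.succ_le_of_lt hkm) with h | h
    · rw [← h, Nat.choose_self]; exact Nat.one_le_two_pow
    · rw [Nat.choose_eq_zero_of_lt h]; exact Nat.zero_le _

/-- Any `{0,1}^l` inner-product representation of the `n × n` diagonal-zero matrix
(`E i · W j = 0` iff `i = j`) satisfies `l ≥ log₂ n + 1`, for `n ≥ 2`. -/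
theorem stmt_8 (n l : ℕ) (hn : 2 ≤ n)
    (E W : Fin n → Fin l → Bool)
    (hrep : ∀ i j : Fin n, (∑ k, (E i k).toNat * (W j k).toNat = 0) ↔ i = j) :
    Real.logb 2 n + 1 ≤ (l : ℝ) := by
  classical
  -- l ≥ 1
  have hl : 1 ≤ l := by
    by_contra h
    have hl0 : l = 0 := by omega
    subst hl0
    have := (hrep ⟨0, by omega⟩ ⟨1, by omega⟩).mp (by simp)
    exact absurd (congrArg Fin.val this) (by simp)
  set f : Fin n → Finset (Fin l) := fun i => Finset.univ.filter (fun k => E i k = true) with hf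
  have hnot : ∀ i j : Fin n, i ≠ j → ¬ f i ⊆ f j := by
    intro i j hij hsub
    have hne : ∑ k, (E i k).toNat * (W j k).toNat ≠ 0 := fun h => hij ((hrep i j).mp h)
    obtain ⟨k, -, hk⟩ := Finset.exists_ne_zero_of_sum_ne_zero hne
    have hE : E i k = true := by
      cases hEik : E i k <;> simp [hEik] at hk ⊢
    have hW : W j k = true := by
      cases hWjk : W j k <;> simp [hWjk, hE] at hk ⊢
    have hEj : E j k = true := by
      have hmem : k ∈ f i := by simp [hf, hE]
      have := hsub hmem
      simpa [hf] using this
    have hzero := (hrep j j).mpr rfl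
    rw [Finset.sum_eq_zero_iff] at hzero
    have := hzero k (Finset.mem_univ k)
    simp [hEj, hW] at this
  have hinj : Function.Injective f := by
    intro i j hij
    by_contra h
    exact hnot i j h (le_of_eq hij)
  have hanti : IsAntichain (· ⊆ ·) ((Finset.univ.image f : Finset (Finset (Fin l))) : Set (Finset (Fin l))) := by
    intro A hA B hB hAB hsub
    simp only [Finset.coe_image, Set.mem_image, Finset.mem_coe] at hA hB
    obtain ⟨i, -, rfl⟩ := hA
    obtain ⟨j, -, rfl⟩ := hB
    exact hnot i j (fun h => hAB (by rw [h])) hsub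
  have hcard : n ≤ 2 ^ (l - 1) := by
    have h1 : (Finset.univ.image f).card = n := by
      rw [Finset.card_image_of_injective _ hinj, Finset.card_univ, Fintype.card_fin]
    have h2 := IsAntichain.sperner hanti
    rw [h1, Fintype.card_fin] at h2
    obtain ⟨m, rfl⟩ := Nat.exists_eq_add_of_le hl
    have : (1 + m).choose ((1+m)/2) ≤ 2 ^ m := by
      rw [Nat.add_comm 1 m]; exact choose_le_two_pow_pred
    calc n ≤ (1 + m).choose ((1+m)/2) := h2
      _ ≤ 2 ^ m := this
      _ = 2 ^ (1 + m - 1) := by simp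
  -- now real computation
  have h2 : (n : ℝ) ≤ (2:ℝ) ^ ((l : ℝ) - 1) := by
    have h3 : (n:ℝ) ≤ (2:ℝ) ^ ((l-1 : ℕ) : ℝ) := by
      rw [Real.rpow_natCast]
      exact_mod_cast hcard
    rwa [Nat.cast_sub hl, Nat.cast_one] at h3
  have hlogb : Real.logb 2 n ≤ (l : ℝ) - 1 := by
    have hn0 : (0:ℝ) < n := by positivity
    have := Real.logb_le_logb_of_le (by norm_num : (1:ℝ) < 2) hn0 h2
    rwa [Real.logb_rpow (by norm_num) (by norm_num)] at this
  linarith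
end

section
/- Let M be an m×n binary matrix and let M_1 = (R_1,C_1), ..., M_t = (R_t,C_t) be pairwise independent submatrices (R_i ∩ R_j = ∅ and C_i ∩ C_j = ∅ for i ≠ j) such that every 1-entry of M lies in some M_i, i.e., M(u,v)=1 implies (u,v) ∈ R_i × C_i for some i. Then L(M) = L(M_1) + L(M_2) + ... + L(M_t), where L denotes the minimum length of a {0,1}-vector inner-product representation. -/
/-- `L M` is the least length `l` of a `{0,1}^l` inner-product representation of the
binary matrix `M`, i.e. vectors `E i`, `W j` with `M i j = 0` iff `E i · W j = 0`. -/
noncomputable def matrixRepLen {α β : Type} (M : α → β → Bool) : ℕ :=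
  sInf {l | ∃ E : α → Fin l → Bool, ∃ W : β → Fin l → Bool,
    ∀ i j, (M i j = false ↔ ∑ k, (E i k).toNat * (W j k).toNat = 0)}

lemma sum_eq_zero_iff' {α : Type*} [Fintype α] (f : α → ℕ) :
    (∑ k, f k = 0) ↔ ∀ k, f k = 0 := by
  simp [Finset.sum_eq_zero_iff]

lemma repSet_nonempty {α β : Type} [Fintype β] (M : α → β → Bool) :
    ∃ E : α → Fin (Fintype.card β) → Bool, ∃ W : β → Fin (Fintype.card β) → Bool,
      ∀ i j, (M i j = false ↔ ∑ k, (E i k).toNat * (W j k).toNat = 0) := by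
  classical
  refine ⟨fun a k => M a ((Fintype.equivFin β).symm k),
    fun b k => decide (Fintype.equivFin β b = k), fun a b => ?_⟩
  have h : ∑ k, (M a ((Fintype.equivFin β).symm k)).toNat *
      (decide (Fintype.equivFin β b = k)).toNat = (M a b).toNat := by
    rw [Finset.sum_eq_single (Fintype.equivFin β b)]
    · simp
    · intro k _ hk
      have : ¬ (Fintype.equivFin β b = k) := fun h => hk h.symm
      simp [this]
    · simp
  rw [h]
  cases hMab : M a b <;> simp

lemma repLen_mem {α β : Type} [Fintype β] (M : α → β → Bool) :
    ∃ E : α → Fin (matrixRepLen M) → Bool, ∃ W : β → Fin (matrixRepLen M) → Bool,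
      ∀ i j, (M i j = false ↔ ∑ k, (E i k).toNat * (W j k).toNat = 0) := by
  have hne : {l | ∃ E : α → Fin l → Bool, ∃ W : β → Fin l → Bool,
      ∀ i j, (M i j = false ↔ ∑ k, (E i k).toNat * (W j k).toNat = 0)}.Nonempty := by
    refine ⟨Fintype.card β, ?_⟩
    exact repSet_nonempty M
  unfold matrixRepLen
  exact Nat.sInf_mem hne

lemma repLen_le {α β : Type} {M : α → β → Bool} {l : ℕ}
    (E : α → Fin l → Bool) (W : β → Fin l → Bool)
    (h : ∀ i j, (M i j = false ↔ ∑ k, (E i k).toNat * (W j k).toNat = 0)) :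
    matrixRepLen M ≤ l :=
  Nat.sInf_le ⟨E, W, h⟩

/-- If all the `1` entries of `M` lie in pairwise independent submatrices
`(R i, C i)`, then `L(M) = Σ i, L(M_i)`. -/
theorem stmt_10 (m n t : ℕ) (M : Fin m → Fin n → Bool)
    (R : Fin t → Finset (Fin m)) (C : Fin t → Finset (Fin n))
    (hR : ∀ i j : Fin t, i ≠ j → Disjoint (R i) (R j))
    (hC : ∀ i j : Fin t, i ≠ j → Disjoint (C i) (C j))
    (hcover : ∀ u v, M u v = true → ∃ i, u ∈ R i ∧ v ∈ C i) :
    matrixRepLen M = ∑ i : Fin t,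
      matrixRepLen (fun (r : {x // x ∈ R i}) (c : {x // x ∈ C i}) => M r.1 c.1) := by
  classical
  set l : Fin t → ℕ := fun i =>
    matrixRepLen (fun (r : {x // x ∈ R i}) (c : {x // x ∈ C i}) => M r.1 c.1) with hl
  apply le_antisymm
  · -- Upper bound: concatenate optimal representations of the blocks.
    choose E W hEW using fun i : Fin t =>
      repLen_mem (fun (r : {x // x ∈ R i}) (c : {x // x ∈ C i}) => M r.1 c.1)
    have e : (Σ i : Fin t, Fin (l i)) ≃ Fin (∑ i, l i) :=
      Fintype.equivFinOfCardEq (by simp)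
    set E' : Fin m → Fin (∑ i, l i) → Bool := fun u k =>
      if h : u ∈ R (e.symm k).1 then E (e.symm k).1 ⟨u, h⟩ (e.symm k).2 else false with hE'
    set W' : Fin n → Fin (∑ i, l i) → Bool := fun v k =>
      if h : v ∈ C (e.symm k).1 then W (e.symm k).1 ⟨v, h⟩ (e.symm k).2 else false with hW'
    have hE'app : ∀ u (p : Σ i : Fin t, Fin (l i)),
        E' u (e p) = if h : u ∈ R p.1 then E p.1 ⟨u, h⟩ p.2 else false := by
      intro u p
      simp only [hE']
      rw [Equiv.symm_apply_apply]
    have hW'app : ∀ v (p : Σ i : Fin t, Fin (l i)),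
        W' v (e p) = if h : v ∈ C p.1 then W p.1 ⟨v, h⟩ p.2 else false := by
      intro v p
      simp only [hW']
      rw [Equiv.symm_apply_apply]
    refine repLen_le E' W' ?_
    intro u v
    rw [sum_eq_zero_iff']
    have hforall : (∀ k, (E' u k).toNat * (W' v k).toNat = 0) ↔
        ∀ p : Σ i : Fin t, Fin (l i), (E' u (e p)).toNat * (W' v (e p)).toNat = 0 := by
      constructor
      · intro h p
        exact h (e p)
      · intro h k
        have := h (e.symm k)
        rwa [Equiv.apply_symm_apply] at this
    rw [hforall]
    constructor
    · intro hMuv ⟨i, q⟩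
      rw [hE'app, hW'app]
      by_cases hu : u ∈ R i
      · by_cases hv : v ∈ C i
        · have h0 := (hEW i ⟨u, hu⟩ ⟨v, hv⟩).mp hMuv
          rw [sum_eq_zero_iff'] at h0
          simpa [hu, hv] using h0 q
        · simp [hu, hv]
      · simp [hu]
    · intro h
      by_contra hMuv
      have hMt : M u v = true := by
        cases hM : M u v
        · exact absurd hM hMuv
        · rfl
      obtain ⟨i, hu, hv⟩ := hcover u v hMt
      have h0 : ¬ (∑ q, (E i ⟨u, hu⟩ q).toNat * (W i ⟨v, hv⟩ q).toNat = 0) := by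
        intro h0
        have := (hEW i ⟨u, hu⟩ ⟨v, hv⟩).mpr h0
        simp [hMt] at this
      rw [sum_eq_zero_iff'] at h0
      push_neg at h0
      obtain ⟨q, hq⟩ := h0
      have := h ⟨i, q⟩
      rw [hE'app, hW'app] at this
      rw [dif_pos hu, dif_pos hv] at this
      exact hq this
  · -- Lower bound: an optimal representation of `M` splits into block representations.
    obtain ⟨E, W, hEW⟩ := repLen_mem M
    have hone : ∀ u v k, E u k = true → W v k = true → M u v = true := by
      intro u v k hEk hWk
      cases hM : M u v
      · have h0 := (hEW u v).mp hM
        rw [sum_eq_zero_iff'] at h0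
        have := h0 k
        simp [hEk, hWk] at this
      · rfl
    set K : Fin t → Finset (Fin (matrixRepLen M)) := fun i =>
      Finset.univ.filter fun k =>
        (∃ u ∈ R i, E u k = true) ∧ (∃ v ∈ C i, W v k = true) with hK
    have hKmem : ∀ i k, k ∈ K i ↔
        (∃ u ∈ R i, E u k = true) ∧ (∃ v ∈ C i, W v k = true) := by
      intro i k; simp [hK]
    -- Each block's rep length is at most the size of its coordinate set.
    have hblock : ∀ i : Fin t, l i ≤ (K i).card := by
      intro i
      set ei := (K i).equivFin with hei
      refine repLen_le (fun (r : {x // x ∈ R i}) q => E r.1 (ei.symm q).1)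
        (fun (c : {x // x ∈ C i}) q => W c.1 (ei.symm q).1) ?_
      intro r c
      rw [sum_eq_zero_iff']
      have hforall : (∀ q, (E r.1 (ei.symm q).1).toNat * (W c.1 (ei.symm q).1).toNat = 0) ↔
          ∀ x : {k // k ∈ K i}, (E r.1 x.1).toNat * (W c.1 x.1).toNat = 0 := by
        constructor
        · intro h x
          have := h (ei x)
          rwa [Equiv.symm_apply_apply] at this
        · intro h q
          exact h (ei.symm q)
      rw [hforall]
      constructor
      · intro hM x
        have h0 := (hEW r.1 c.1).mp hM
        rw [sum_eq_zero_iff'] at h0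
        exact h0 x.1
      · intro h
        cases hM : M r.1 c.1
        · rfl
        · exfalso
          have h0 : ¬ (∑ k, (E r.1 k).toNat * (W c.1 k).toNat = 0) := by
            intro h0
            have := (hEW r.1 c.1).mpr h0
            simp [hM] at this
          rw [sum_eq_zero_iff'] at h0
          push_neg at h0
          obtain ⟨k, hk⟩ := h0
          have hEt : E r.1 k = true := by
            cases hE : E r.1 k
            · simp [hE] at hk
            · rfl
          have hWt : W c.1 k = true := by
            cases hW : W c.1 k
            · simp [hW] at hk
            · rfl
          have hkK : k ∈ K i := (hKmem i k).mpr ⟨⟨r.1, r.2, hEt⟩, ⟨c.1, c.2, hWt⟩⟩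
          exact hk (h ⟨k, hkK⟩)
    -- The coordinate sets are pairwise disjoint.
    have hKdisj : ∀ i j : Fin t, i ≠ j → Disjoint (K i) (K j) := by
      intro i j hij
      rw [Finset.disjoint_left]
      intro k hki hkj
      obtain ⟨⟨u, hu, hEu⟩, -⟩ := (hKmem i k).mp hki
      obtain ⟨-, ⟨v, hv, hWv⟩⟩ := (hKmem j k).mp hkj
      have hM := hone u v k hEu hWv
      obtain ⟨c, huc, hvc⟩ := hcover u v hM
      have hic : i = c := by
        by_contra h
        exact (Finset.disjoint_left.mp (hR i c h)) hu huc
      have hjc : j = c := by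
        by_contra h
        exact (Finset.disjoint_left.mp (hC j c h)) hv hvc
      exact hij (hic.trans hjc.symm)
    calc ∑ i, l i ≤ ∑ i, (K i).card := Finset.sum_le_sum fun i _ => hblock i
      _ = (Finset.univ.biUnion K).card :=
          (Finset.card_biUnion fun i _ j _ hij => hKdisj i j hij).symm
      _ ≤ Fintype.card (Fin (matrixRepLen M)) := Finset.card_le_univ _
      _ = matrixRepLen M := Fintype.card_fin _
end

section
/- Fix ε > 0. For all sufficiently large n, the fraction of n×n binary matrices M that admit a {0,1}^l inner-product representation with l ≤ n/2 − n^(1−ε) tends to 0; equivalently, the number of such matrices is o(2^(n²)). -/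
open Finset

/-- Pad a length-`l` vector to length `m` with `false`. -/
def padVec {n l m : ℕ} (E : Fin n → Fin l → Bool) (i : Fin n) (k : Fin m) : Bool :=
  if h : (k : ℕ) < l then E i ⟨k, h⟩ else false

lemma padSum_iff {n l m : ℕ} (hlm : l ≤ m) (E W : Fin n → Fin l → Bool) (i j : Fin n) :
    (∑ k : Fin m, (padVec E i k).toNat * (padVec W j k).toNat = 0) ↔
    (∑ k : Fin l, (E i k).toNat * (W j k).toNat = 0) := by
  simp only [Finset.sum_eq_zero_iff, Finset.mem_univ, true_implies]
  constructor
  · intro h k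
    have := h ⟨(k : ℕ), lt_of_lt_of_le k.2 hlm⟩
    simpa [padVec, k.2] using this
  · intro h k
    by_cases hk : (k : ℕ) < l
    · simpa [padVec, hk] using h ⟨(k : ℕ), hk⟩
    · simp [padVec, hk]

lemma card_bound (ε : ℝ) (n : ℕ) (hn : 1 ≤ n) :
    Nat.card {M : Fin n → Fin n → Bool //
        ∃ l : ℕ, (l : ℝ) ≤ (n : ℝ) / 2 - (n : ℝ) ^ ((1 : ℝ) - ε) ∧
          ∃ E W : Fin n → Fin l → Bool,
            ∀ i j, (M i j = false ↔ ∑ k, (E i k).toNat * (W j k).toNat = 0)} ≤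
      2 ^ (n ^ 2 - n) := by
  classical
  set m : ℕ := (n - 1) / 2 with hm
  -- every admissible l satisfies l ≤ m
  have hlm : ∀ l : ℕ, (l : ℝ) ≤ (n : ℝ) / 2 - (n : ℝ) ^ ((1 : ℝ) - ε) → l ≤ m := by
    intro l hl
    have hpos : (0 : ℝ) < (n : ℝ) ^ ((1 : ℝ) - ε) :=
      Real.rpow_pos_of_pos (by exact_mod_cast hn) _
    have h2 : (2 * l : ℝ) < (n : ℝ) := by nlinarith
    have h2' : 2 * l < n := by exact_mod_cast h2
    omega
  -- injection into pairs of padded matrices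
  set T := (Fin n → Fin m → Bool) × (Fin n → Fin m → Bool) with hT
  set S := {M : Fin n → Fin n → Bool //
        ∃ l : ℕ, (l : ℝ) ≤ (n : ℝ) / 2 - (n : ℝ) ^ ((1 : ℝ) - ε) ∧
          ∃ E W : Fin n → Fin l → Bool,
            ∀ i j, (M i j = false ↔ ∑ k, (E i k).toNat * (W j k).toNat = 0)} with hS
  let F : S → T := fun s =>
    (padVec s.2.choose_spec.2.choose, padVec s.2.choose_spec.2.choose_spec.choose)
  have key : ∀ s : S, ∀ i j, (s.1 i j = false ↔
      ∑ k : Fin m, ((F s).1 i k).toNat * ((F s).2 j k).toNat = 0) := by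
    intro s i j
    have hl := hlm _ s.2.choose_spec.1
    have h := s.2.choose_spec.2.choose_spec.choose_spec i j
    rw [h]
    exact (padSum_iff hl _ _ i j).symm
  have hF : Function.Injective F := by
    intro s t hst
    apply Subtype.ext
    funext i j
    have h1 := key s i j
    have h2 := key t i j
    rw [hst] at h1
    have : s.1 i j = false ↔ t.1 i j = false := h1.trans h2.symm
    revert this
    cases s.1 i j <;> cases t.1 i j <;> simp
  have hcard : Nat.card S ≤ Nat.card T := Nat.card_le_card_of_injective F hF
  have hTcard : Nat.card T = 2 ^ (n * m) * 2 ^ (n * m) := by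
    simp only [hT, Nat.card_eq_fintype_card, Fintype.card_prod, Fintype.card_fun,
      Fintype.card_bool, Fintype.card_fin]
    rw [← pow_mul, Nat.mul_comm m n]
  have hexp : 2 ^ (n * m) * 2 ^ (n * m) ≤ 2 ^ (n ^ 2 - n) := by
    rw [← pow_add]
    apply Nat.pow_le_pow_right (by norm_num)
    have h1 : 2 * m ≤ n - 1 := by omega
    have : n * m + n * m = n * (2 * m) := by ring
    rw [this]
    calc n * (2 * m) ≤ n * (n - 1) := Nat.mul_le_mul_left n h1
      _ = n ^ 2 - n := by rw [pow_two, Nat.mul_sub_one]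
  exact hcard.trans (hTcard ▸ hexp)

/-- For any fixed `ε > 0`, the fraction of `n × n` binary matrices admitting a
`{0,1}^l` inner-product representation with `l ≤ n/2 - n^(1-ε)` tends to `0`. -/
theorem stmt_11 (ε : ℝ) (hε : 0 < ε) :
    Filter.Tendsto (fun n : ℕ =>
      (Nat.card {M : Fin n → Fin n → Bool //
        ∃ l : ℕ, (l : ℝ) ≤ (n : ℝ) / 2 - (n : ℝ) ^ ((1 : ℝ) - ε) ∧
          ∃ E W : Fin n → Fin l → Bool,
            ∀ i j, (M i j = false ↔ ∑ k, (E i k).toNat * (W j k).toNat = 0)} : ℝ)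
        / 2 ^ (n ^ 2)) Filter.atTop (nhds 0) := by
  have hg : Filter.Tendsto (fun n : ℕ => ((1:ℝ)/2) ^ n) Filter.atTop (nhds 0) :=
    tendsto_pow_atTop_nhds_zero_of_lt_one (by norm_num) (by norm_num)
  apply squeeze_zero' (Filter.Eventually.of_forall fun n => by positivity)
    ((Filter.eventually_ge_atTop 1).mono ?_) hg
  intro n hn
  have hc := card_bound ε n hn
  have hcast : (Nat.card {M : Fin n → Fin n → Bool //
        ∃ l : ℕ, (l : ℝ) ≤ (n : ℝ) / 2 - (n : ℝ) ^ ((1 : ℝ) - ε) ∧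
          ∃ E W : Fin n → Fin l → Bool,
            ∀ i j, (M i j = false ↔ ∑ k, (E i k).toNat * (W j k).toNat = 0)} : ℝ) ≤
      2 ^ (n ^ 2 - n) := by exact_mod_cast hc
  have hnn : n ≤ n ^ 2 := Nat.le_self_pow (by norm_num) n
  have hsplit : (2 : ℝ) ^ (n ^ 2) = 2 ^ (n ^ 2 - n) * 2 ^ n := by
    have h : n ^ 2 - n + n = n ^ 2 := Nat.sub_add_cancel hnn
    rw [← pow_add, h]
  have heq : ((1:ℝ)/2) ^ n = 2 ^ (n ^ 2 - n) / 2 ^ (n ^ 2) := by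
    rw [hsplit, div_pow, one_pow]
    rw [eq_div_iff (by positivity)]
    field_simp
  rw [heq]
  gcongr
end

section
/- For any ε > 0 there exists a constant C such that for almost all positive integers n (i.e., for a fraction at least 1−2^{−Δ} of integers with Δ = ε log n), the Kolmogorov complexity of n satisfies K(n) ≥ (1−ε) log₂ n. Consequently, if every GTAM tile system with |T| tile types can be encoded in at most c₁|T|² bits and a fixed-size simulator can recover n from any encoding of a system uniquely assembling an n×n square, then for almost all n any such system needs |T| = Ω(√(log n)) tile types. -/
/-- Injective encoding of boolean lists into naturals (bijective base-2 numeration). -/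
def encL : List Bool → ℕ
  | [] => 0
  | b :: l => 2 * encL l + (if b then 2 else 1)

lemma encL_le : ∀ l : List Bool, encL l + 2 ≤ 2 ^ (l.length + 1)
  | [] => by simp [encL]
  | b :: l => by
    have ih := encL_le l
    simp only [encL, List.length_cons]
    have : (if b then 2 else 1) ≤ 2 := by cases b <;> simp
    calc 2 * encL l + (if b then 2 else 1) + 2 ≤ 2 * (encL l + 2) := by omega
      _ ≤ 2 * 2 ^ (l.length + 1) := by omega
      _ = 2 ^ (l.length + 1 + 1) := by ring

lemma encL_inj : ∀ l₁ l₂ : List Bool, encL l₁ = encL l₂ → l₁ = l₂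
  | [], [], _ => rfl
  | [], b :: l, h => by cases b <;> simp [encL] at h
  | b :: l, [], h => by cases b <;> simp [encL] at h
  | b₁ :: l₁, b₂ :: l₂, h => by
    simp only [encL] at h
    have hb : b₁ = b₂ := by cases b₁ <;> cases b₂ <;> simp_all <;> omega
    subst hb
    have he : encL l₁ = encL l₂ := by cases b₁ <;> simp_all
    rw [encL_inj l₁ l₂ he]

/-- Counting bound: the number of `n ∈ [1,N]` having a short program is at most
`2 · N^(1-ε)`. -/
lemma card_short_le (U : List Bool → Option ℕ) (ε : ℝ) (hε0 : 0 < ε) (hε1 : ε < 1)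
    (N : ℕ) (hN : 1 ≤ N) :
    (Nat.card {n : ℕ // n ∈ Finset.Icc 1 N ∧
      ∃ p : List Bool, U p = some n ∧
        (p.length : ℝ) < (1 - ε) * Real.logb 2 n} : ℝ) ≤ 2 * (N : ℝ) ^ ((1:ℝ) - ε) := by
  set m : ℕ := ⌈(1 - ε) * Real.logb 2 N⌉₊ with hm
  have hNpos : (0:ℝ) < N := by exact_mod_cast hN
  have hlogN : 0 ≤ Real.logb 2 N := Real.logb_nonneg (by norm_num) (by exact_mod_cast hN)
  have h1ε : (0:ℝ) ≤ 1 - ε := by linarith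
  -- injection into Fin (2^m)
  have key : Nat.card {n : ℕ // n ∈ Finset.Icc 1 N ∧
      ∃ p : List Bool, U p = some n ∧
        (p.length : ℝ) < (1 - ε) * Real.logb 2 n} ≤ 2 ^ m := by
    have : ∀ x : {n : ℕ // n ∈ Finset.Icc 1 N ∧
        ∃ p : List Bool, U p = some n ∧ (p.length : ℝ) < (1 - ε) * Real.logb 2 n},
        encL (Classical.choose x.2.2) < 2 ^ m := by
      rintro ⟨n, hmem, hex⟩
      obtain ⟨hUp, hlen⟩ := Classical.choose_spec hex
      set p := Classical.choose hex
      have hn1 : 1 ≤ n := (Finset.mem_Icc.mp hmem).1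
      have hnN : n ≤ N := (Finset.mem_Icc.mp hmem).2
      have hlog : Real.logb 2 n ≤ Real.logb 2 N := by
        apply Real.logb_le_logb_of_le (by norm_num) (by exact_mod_cast hn1)
        exact_mod_cast hnN
      have hlen2 : (p.length : ℝ) < (1 - ε) * Real.logb 2 N := by
        calc (p.length : ℝ) < (1 - ε) * Real.logb 2 n := hlen
          _ ≤ (1 - ε) * Real.logb 2 N := by nlinarith
      have hlm : p.length < m := Nat.lt_ceil.mpr hlen2
      have := encL_le p
      have h2 : 2 ^ (p.length + 1) ≤ 2 ^ m := Nat.pow_le_pow_right (by norm_num) (by omega)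
      omega
    have hf : Function.Injective
        (fun x : {n : ℕ // n ∈ Finset.Icc 1 N ∧
          ∃ p : List Bool, U p = some n ∧ (p.length : ℝ) < (1 - ε) * Real.logb 2 n} =>
          (⟨encL (Classical.choose x.2.2), this x⟩ : Fin (2 ^ m))) := by
      rintro ⟨n₁, hmem₁, hex₁⟩ ⟨n₂, hmem₂, hex₂⟩ h
      simp only [Fin.mk.injEq] at h
      have hp := encL_inj _ _ h
      have h1 := (Classical.choose_spec hex₁).1
      have h2 := (Classical.choose_spec hex₂).1
      rw [hp] at h1
      rw [h1] at h2
      simp only [Option.some.injEq] at h2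
      exact Subtype.ext h2
    calc Nat.card _ ≤ Nat.card (Fin (2 ^ m)) := Nat.card_le_card_of_injective _ hf
      _ = 2 ^ m := Nat.card_eq_fintype_card.trans (Fintype.card_fin _)
  -- from 2^m to the real bound
  have hmR : (m : ℝ) ≤ (1 - ε) * Real.logb 2 N + 1 :=
    le_of_lt (Nat.ceil_lt_add_one (by positivity))
  have hpow : ((2:ℝ) ^ m : ℝ) ≤ 2 * (N : ℝ) ^ ((1:ℝ) - ε) := by
    have h1 : ((2:ℝ) ^ m) = (2:ℝ) ^ (m : ℝ) := by
      rw [Real.rpow_natCast]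
    have h2 : (2:ℝ) ^ (m : ℝ) ≤ (2:ℝ) ^ ((1 - ε) * Real.logb 2 N + 1) :=
      Real.rpow_le_rpow_of_exponent_le (by norm_num) hmR
    have h3 : (2:ℝ) ^ ((1 - ε) * Real.logb 2 N + 1)
        = 2 * (N : ℝ) ^ ((1:ℝ) - ε) := by
      rw [Real.rpow_add (by norm_num), Real.rpow_one, mul_comm (1 - ε),
        Real.rpow_mul (by norm_num), Real.rpow_logb (by norm_num) (by norm_num) hNpos]
      ring
    rw [h1]; linarith
  calc (Nat.card _ : ℝ) ≤ ((2 ^ m : ℕ) : ℝ) := by exact_mod_cast key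
    _ = (2:ℝ) ^ m := by push_cast; ring
    _ ≤ 2 * (N : ℝ) ^ ((1:ℝ) - ε) := hpow

/-- (1) For any decoder `U` and any `0 < ε < 1`, for almost all `n` (in density),
every program `p` with `U p = n` has length at least `(1-ε)·log₂ n`, i.e.
`K(n) ≥ (1-ε)log₂ n`.  (2) Consequently, if GTAM systems are encoded in at most
`c₁|T|²` bits and a fixed simulator `U` recovers `n` from the encoding of any
system `sys n` uniquely assembling an `n × n` square, then for almost all `n` the
number of tile types satisfies `|T| = Ω(√(log n))`. -/
theorem stmt_18 (U : List Bool → Option ℕ) (ε : ℝ) (hε0 : 0 < ε) (hε1 : ε < 1) :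
    (Filter.Tendsto (fun N : ℕ =>
        (Nat.card {n : ℕ // n ∈ Finset.Icc 1 N ∧
          ∃ p : List Bool, U p = some n ∧
            (p.length : ℝ) < (1 - ε) * Real.logb 2 n} : ℝ) / (N : ℝ))
      Filter.atTop (nhds 0)) ∧
    (∀ (Sys : Type) (enc : Sys → List Bool) (numTiles : Sys → ℕ)
        (sys : ℕ → Sys) (c₁ : ℝ),
      (∀ s : Sys, ((enc s).length : ℝ) ≤ c₁ * (numTiles s : ℝ) ^ 2) →
      (∀ n : ℕ, U (enc (sys n)) = some n) →
      ∃ c : ℝ, 0 < c ∧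
        Filter.Tendsto (fun N : ℕ =>
            (Nat.card {n : ℕ // n ∈ Finset.Icc 1 N ∧
              (numTiles (sys n) : ℝ) < c * Real.sqrt (Real.logb 2 n)} : ℝ) / (N : ℝ))
          Filter.atTop (nhds 0)) := by
  have hg : Filter.Tendsto (fun N : ℕ => 2 * (N : ℝ) ^ (-ε)) Filter.atTop (nhds 0) := by
    have h := (tendsto_rpow_neg_atTop hε0).comp (tendsto_natCast_atTop_atTop (R := ℝ))
    have := h.const_mul (2:ℝ)
    simpa using this
  have part1 : Filter.Tendsto (fun N : ℕ =>
      (Nat.card {n : ℕ // n ∈ Finset.Icc 1 N ∧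
        ∃ p : List Bool, U p = some n ∧
          (p.length : ℝ) < (1 - ε) * Real.logb 2 n} : ℝ) / (N : ℝ))
      Filter.atTop (nhds 0) := by
    apply squeeze_zero' (g := fun N : ℕ => 2 * (N : ℝ) ^ (-ε))
    · filter_upwards with N
      positivity
    · filter_upwards [Filter.eventually_ge_atTop 1] with N hN
      have hNpos : (0:ℝ) < N := by exact_mod_cast hN
      have hb := card_short_le U ε hε0 hε1 N hN
      rw [div_le_iff₀ hNpos]
      calc (Nat.card _ : ℝ) ≤ 2 * (N : ℝ) ^ ((1:ℝ) - ε) := hb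
        _ = 2 * (N : ℝ) ^ (-ε) * N := by
          rw [show (1:ℝ) - ε = -ε + 1 by ring, Real.rpow_add hNpos, Real.rpow_one]; ring
    · exact hg
  refine ⟨part1, ?_⟩
  intro Sys enc numTiles sys c₁ hlen hU
  by_cases hc₁ : c₁ ≤ 0
  · exfalso
    have h0 : ∀ s : Sys, enc s = [] := by
      intro s
      have := hlen s
      have h2 : c₁ * (numTiles s : ℝ) ^ 2 ≤ 0 :=
        mul_nonpos_of_nonpos_of_nonneg hc₁ (by positivity)
      have : ((enc s).length : ℝ) ≤ 0 := le_trans this h2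
      have : (enc s).length = 0 := by exact_mod_cast le_antisymm this (by positivity)
      exact List.length_eq_zero_iff.mp this
    have h1 := hU 0
    have h2 := hU 1
    rw [h0 (sys 0)] at h1
    rw [h0 (sys 1)] at h2
    rw [h1] at h2
    simp at h2
  · push_neg at hc₁
    have hdpos : (0:ℝ) < (1 - ε) / (2 * c₁) := div_pos (by linarith) (by linarith)
    refine ⟨Real.sqrt ((1 - ε) / (2 * c₁)), Real.sqrt_pos.mpr hdpos, ?_⟩
    set c := Real.sqrt ((1 - ε) / (2 * c₁)) with hc
    have hc2 : c ^ 2 = (1 - ε) / (2 * c₁) := Real.sq_sqrt hdpos.le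
    -- the second set injects into the first
    apply squeeze_zero' (g := fun N : ℕ =>
      (Nat.card {n : ℕ // n ∈ Finset.Icc 1 N ∧
        ∃ p : List Bool, U p = some n ∧
          (p.length : ℝ) < (1 - ε) * Real.logb 2 n} : ℝ) / (N : ℝ))
    · filter_upwards with N
      positivity
    · filter_upwards with N
      have hfin : Finite {n : ℕ // n ∈ Finset.Icc 1 N ∧
          ∃ p : List Bool, U p = some n ∧
            (p.length : ℝ) < (1 - ε) * Real.logb 2 n} := by
        apply Finite.of_injective
          (fun x => (⟨x.1, x.2.1⟩ : (Finset.Icc 1 N : Finset ℕ)))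
        rintro ⟨n₁, h₁⟩ ⟨n₂, h₂⟩ h
        simpa [Subtype.ext_iff] using h
      have hcard : Nat.card {n : ℕ // n ∈ Finset.Icc 1 N ∧
            (numTiles (sys n) : ℝ) < c * Real.sqrt (Real.logb 2 n)}
          ≤ Nat.card {n : ℕ // n ∈ Finset.Icc 1 N ∧
            ∃ p : List Bool, U p = some n ∧
              (p.length : ℝ) < (1 - ε) * Real.logb 2 n} := by
        have hsub : ∀ x : {n : ℕ // n ∈ Finset.Icc 1 N ∧
            (numTiles (sys n) : ℝ) < c * Real.sqrt (Real.logb 2 n)},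
            ∃ p : List Bool, U p = some x.1 ∧
              (p.length : ℝ) < (1 - ε) * Real.logb 2 x.1 := by
          rintro ⟨n, hmem, hlt⟩
          refine ⟨enc (sys n), hU n, ?_⟩
          have hn1 : 1 ≤ n := (Finset.mem_Icc.mp hmem).1
          have hL : 0 ≤ Real.logb 2 n :=
            Real.logb_nonneg (by norm_num) (by exact_mod_cast hn1)
          have hsq : Real.sqrt (Real.logb 2 n) ^ 2 = Real.logb 2 n := Real.sq_sqrt hL
          have ht0 : (0:ℝ) ≤ (numTiles (sys n) : ℝ) := Nat.cast_nonneg _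
          have htsq : ((numTiles (sys n) : ℝ)) ^ 2 < c ^ 2 * Real.logb 2 n := by
            have := mul_self_lt_mul_self ht0 hlt
            nlinarith [Real.sqrt_nonneg (Real.logb 2 n), hsq]
          have hlen' := hlen (sys n)
          calc ((enc (sys n)).length : ℝ)
              ≤ c₁ * (numTiles (sys n) : ℝ) ^ 2 := hlen'
            _ < c₁ * (c ^ 2 * Real.logb 2 n) := by
                exact mul_lt_mul_of_pos_left htsq hc₁
            _ = (1 - ε) / 2 * Real.logb 2 n := by
                rw [hc2]; field_simp
            _ ≤ (1 - ε) * Real.logb 2 n := by nlinarith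
        exact Nat.card_le_card_of_injective
          (fun x => ⟨x.1, x.2.1, hsub x⟩)
          (by
            intro x y h
            have hv := congrArg Subtype.val h
            exact Subtype.ext hv)
      exact div_le_div_of_nonneg_right (by exact_mod_cast hcard) (Nat.cast_nonneg N)
    · exact part1
end
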